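/- Let F be a minimal 2-edge-connected spanning multi-subgraph containing two parallel copies of an edge uv. Then uv is a bridge of the simple graph underlying F (the simplification of (V,F)). -/

import Mathlib

open Finset

attribute [local instance] Classical.propDecidable

/-- An (unordered) edge `e` crosses the vertex set `S`. -/
def crosses {V : Type*} (e : Sym2 V) (S : Finset V) : Prop :=
  ∃ a b : V, e = s(a, b) ∧ a ∈ S ∧ b ∉ S

/-- A multiset of edges (given by multiplicities `m`) is 2-edge-connected. -/
def TwoEC {V : Type*} [Fintype V] (m : Sym2 V → ℕ) : Prop :=
  ∀ S : Finset V, S.Nonempty → S ≠ Finset.univ →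
    2 ≤ ∑ e ∈ Finset.univ.filter (fun e => crosses e S), m e

private lemma walk_stay {V : Type*} (H : SimpleGraph V) (S : Finset V)
    (h : ∀ a b : V, H.Adj a b → a ∈ S → b ∈ S) :
    ∀ {x y : V}, H.Walk x y → x ∈ S → y ∈ S
  | _, _, SimpleGraph.Walk.nil, hx => hx
  | _, _, SimpleGraph.Walk.cons h' p, hx => walk_stay H S h p (h _ _ h' hx)

/-- If a minimal 2-edge-connected spanning multi-subgraph contains two parallel copies of
an edge `uv`, then `uv` is a bridge of the underlying simple graph. -/
theorem stmt7 {V : Type*} [Fintype V] [DecidableEq V]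
    (m : Sym2 V → ℕ) (hec : TwoEC m)
    (hmin : ∀ e : Sym2 V, 0 < m e → ¬ TwoEC (Function.update m e (m e - 1)))
    (u v : V) (huv : u ≠ v) (hpar : 2 ≤ m s(u, v)) :
    (SimpleGraph.fromRel (fun a b => 0 < m s(a, b))).IsBridge s(u, v) := by
  classical
  set G := SimpleGraph.fromRel (fun a b : V => 0 < m s(a, b)) with hG
  have hadj : G.Adj u v := ⟨huv, Or.inl (by omega)⟩
  rw [SimpleGraph.isBridge_iff]
  have hpos : 0 < m s(u, v) := by omega
  have hnot := hmin s(u, v) hpos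
  rw [TwoEC] at hnot
  push_neg at hnot
  obtain ⟨S, hSne, hSuniv, hlt⟩ := hnot
  have hge := hec S hSne hSuniv
  set T := Finset.univ.filter (fun e : Sym2 V => crosses e S) with hT
  have hmemT : s(u, v) ∈ T := by
    by_contra hmem
    rw [Finset.sum_update_of_notMem hmem] at hlt
    omega
  have hcross : crosses s(u, v) S := (Finset.mem_filter.mp hmemT).2
  rw [Finset.sum_update_of_mem hmemT] at hlt
  have hrest : ∑ e ∈ T \ {s(u, v)}, m e = 0 := by omega
  have hzero : ∀ e : Sym2 V, crosses e S → e ≠ s(u, v) → m e = 0 := by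
    intro e hce hne
    have hmem : e ∈ T \ {s(u, v)} :=
      Finset.mem_sdiff.mpr ⟨Finset.mem_filter.mpr ⟨Finset.mem_univ _, hce⟩, by simpa using hne⟩
    exact Finset.sum_eq_zero_iff.mp hrest e hmem
  have key : ∀ x y : V, (G \ SimpleGraph.fromEdgeSet {s(u, v)}).Adj x y → x ∈ S → y ∈ S := by
    intro x y hxy hxS
    by_contra hyS
    rw [SimpleGraph.sdiff_adj] at hxy
    obtain ⟨hGxy, hnd⟩ := hxy
    have hne : s(x, y) ≠ s(u, v) := by
      intro h
      exact hnd (by simp [SimpleGraph.fromEdgeSet_adj, h, hGxy.ne])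
    have hmpos : 0 < m s(x, y) := by
      rcases hGxy with ⟨hxyne, h | h⟩
      · exact h
      · rwa [Sym2.eq_swap] at h
    have := hzero s(x, y) ⟨x, y, rfl, hxS, hyS⟩ hne
    omega
  intro hreach
  obtain ⟨a, b, heq, haS, hbS⟩ := hcross
  rcases Sym2.eq_iff.mp heq with ⟨rfl, rfl⟩ | ⟨rfl, rfl⟩
  · obtain ⟨p⟩ := hreach
    exact hbS (walk_stay _ S key p haS)
  · obtain ⟨p⟩ := hreach.symm
    exact hbS (walk_stay _ S key p haS)
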